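/- If λ₁ ≥ λ₂ ≥ ⋯ ≥ λₙ are real numbers with ∑ᵢ arctan λᵢ ≥ (n−2)π/2 + δ for some δ > 0, then λ₁, …, λ_{n−1} are all positive. -/

import Mathlib

open Real Finset

theorem stmt0 (n : ℕ) (hn : 2 ≤ n) (lam : Fin n → ℝ) (hmono : Antitone lam)
    (δ : ℝ) (hδ : 0 < δ)
    (hsum : ((n : ℝ) - 2) * (π / 2) + δ ≤ ∑ i, Real.arctan (lam i)) :
    ∀ i : Fin n, (i : ℕ) < n - 1 → 0 < lam i := by
  intro i hi
  by_contra h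
  push_neg at h
  have hn1 : n - 1 < n := by omega
  set k : Fin n := ⟨n - 1, hn1⟩ with hk
  have hik : i ≠ k := by
    intro he
    rw [he] at hi
    exact lt_irrefl _ hi
  have hikle : i ≤ k := by
    rw [Fin.le_def]
    simp
    show (i:ℕ) ≤ n - 1
    omega
  have hlek : lam k ≤ 0 := le_trans (hmono hikle) h
  have hbound : ∀ j ∈ Finset.univ, Real.arctan (lam j) ≤
      (if j = i ∨ j = k then 0 else π / 2) := by
    intro j _
    by_cases hj : j = i ∨ j = k
    · rw [if_pos hj]
      rcases hj with hj | hj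
      · subst hj; exact Real.arctan_zero ▸ Real.arctan_strictMono.monotone h
      · subst hj; exact Real.arctan_zero ▸ Real.arctan_strictMono.monotone hlek
    · rw [if_neg hj]
      exact le_of_lt (Real.arctan_lt_pi_div_two _)
  have hsum2 := Finset.sum_le_sum hbound
  have hcard : ∑ j : Fin n, (if j = i ∨ j = k then (0:ℝ) else π / 2)
      = ((n : ℝ) - 2) * (π / 2) := by
    have hmem : ∀ j : Fin n, (j = i ∨ j = k) ↔ j ∈ ({i, k} : Finset (Fin n)) := by
      intro j; simp
    rw [Finset.sum_congr rfl (fun j _ => by rw [if_congr (hmem j) rfl rfl])]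
    rw [Finset.sum_ite, Finset.sum_const, Finset.sum_const]
    have h1 : (Finset.univ.filter (· ∈ ({i, k} : Finset (Fin n)))) = {i, k} := by
      ext j; simp
    have h2 : ({i, k} : Finset (Fin n)).card = 2 := by
      rw [Finset.card_insert_of_notMem (by simpa using hik), Finset.card_singleton]
    rw [h1, h2]
    have h3 : (Finset.univ.filter (¬ · ∈ ({i, k} : Finset (Fin n)))).card = n - 2 := by
      rw [Finset.filter_not, Finset.card_sdiff_of_subset (by simp), h1, h2]
      simp
    rw [h3]
    simp only [nsmul_eq_mul, Nat.cast_sub hn, smul_zero]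
    push_cast
    ring
  rw [hcard] at hsum2
  linarith
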